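/- Fix natural numbers k ≥ 1, n ≥ k, and a real number ε with 0 ≤ ε < 1. Then ∑_{r=k}^{n} ∑_{e=0}^{∞} min(r+e, n) · C(r+e−1, e) ε^e (1−ε)^r · P_{M_n}(r) ≤ (1/(1−ε)) · ∑_{r=k}^{n} r · P_{M_n}(r), where P_{M_n}(r) = 2^{k−r} ∏_{l=0}^{n−r−1} (1 − 2^{l−(n−k)}). That is, E[N_n] ≤ E[M_n]/(1−ε). -/

import Mathlib

/-- `P_{M_n}(r) = 2^{k−r} ∏_{l=0}^{n−r−1} (1 − 2^{l−(n−k)})`. -/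
noncomputable def PM (k n r : ℕ) : ℝ :=
  (2 : ℝ) ^ ((k : ℤ) - (r : ℤ)) *
    ∏ l ∈ Finset.range (n - r), (1 - (2 : ℝ) ^ ((l : ℤ) - ((n : ℤ) - (k : ℤ))))

lemma PM_nonneg (k n r : ℕ) (hk : k ≤ r) (hr : r ≤ n) : 0 ≤ PM k n r := by
  apply mul_nonneg (by positivity)
  apply Finset.prod_nonneg
  intro l hl
  rw [Finset.mem_range] at hl
  have hle : (l : ℤ) - ((n : ℤ) - (k : ℤ)) ≤ 0 := by omega
  have : (2 : ℝ) ^ ((l : ℤ) - ((n : ℤ) - (k : ℤ))) ≤ 1 :=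
    zpow_le_one_of_nonpos₀ (by norm_num) hle
  linarith

lemma choose_ident (r e : ℕ) (hr : 1 ≤ r) :
    (r + e) * Nat.choose (r + e - 1) e = r * Nat.choose (e + r) r := by
  obtain ⟨s, rfl⟩ := Nat.exists_eq_add_of_le hr
  have h1 : 1 + s + e - 1 = s + e := by omega
  have h2 : (s + e).choose e = (s + e).choose s := by
    have := Nat.choose_symm (n := s + e) (k := e) (Nat.le_add_left e s)
    simpa using this.symm
  rw [h1, h2]
  have h3 := Nat.add_one_mul_choose_eq (s + e) s
  have e1 : 1 + s + e = (s + e).succ := by omega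
  have e2 : e + (1 + s) = (s + e).succ := by omega
  have e3 : 1 + s = s.succ := by omega
  rw [e1, e2, e3, h3, mul_comm]

/-- `E[N_n] ≤ E[M_n]/(1−ε)`: the expected length of an incremental-redundancy round
over a memoryless erasure channel with erasure probability `ε` is at most the expected
number of unerased symbols needed to decode, divided by `1 − ε`. -/
theorem mean_round_length_le (k n : ℕ) (hk : 1 ≤ k) (hn : k ≤ n) (ε : ℝ)
    (h₀ : 0 ≤ ε) (h₁ : ε < 1) :
    (∑ r ∈ Finset.Icc k n, ∑' e : ℕ,
        (min (r + e) n : ℝ) * (Nat.choose (r + e - 1) e : ℝ) * ε ^ e * (1 - ε) ^ r *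
          PM k n r)
      ≤ (1 / (1 - ε)) * ∑ r ∈ Finset.Icc k n, (r : ℝ) * PM k n r := by
  have hε : ‖ε‖ < 1 := by rw [Real.norm_eq_abs, abs_of_nonneg h₀]; exact h₁
  have h1ε : (0:ℝ) < 1 - ε := by linarith
  rw [Finset.mul_sum]
  apply Finset.sum_le_sum
  intro r hr
  rw [Finset.mem_Icc] at hr
  have hkr : k ≤ r := hr.1
  have hrn : r ≤ n := hr.2
  have hr1 : 1 ≤ r := le_trans hk hkr
  have hPM : 0 ≤ PM k n r := PM_nonneg k n r hkr hrn
  -- the dominating summable function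
  set c : ℝ := (r : ℝ) * (1 - ε) ^ r * PM k n r with hc
  have hcnn : 0 ≤ c := by positivity
  have hgsum : Summable (fun e : ℕ => c * ((Nat.choose (e + r) r : ℝ) * ε ^ e)) :=
    (summable_choose_mul_geometric_of_norm_lt_one r hε).mul_left c
  have hle : ∀ e : ℕ,
      (min (r + e) n : ℝ) * (Nat.choose (r + e - 1) e : ℝ) * ε ^ e * (1 - ε) ^ r *
        PM k n r ≤ c * ((Nat.choose (e + r) r : ℝ) * ε ^ e) := by
    intro e
    have key : ((r + e : ℕ) : ℝ) * (Nat.choose (r + e - 1) e : ℝ) =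
        (r : ℝ) * (Nat.choose (e + r) r : ℝ) := by
      have := choose_ident r e hr1
      exact_mod_cast congrArg (Nat.cast (R := ℝ)) this
    have hmin : (min (r + e) n : ℝ) ≤ ((r + e : ℕ) : ℝ) := by
      exact_mod_cast Nat.cast_le.mpr (min_le_left _ _)
    calc (min (r + e) n : ℝ) * (Nat.choose (r + e - 1) e : ℝ) * ε ^ e * (1 - ε) ^ r *
          PM k n r
        ≤ ((r + e : ℕ) : ℝ) * (Nat.choose (r + e - 1) e : ℝ) * ε ^ e * (1 - ε) ^ r *
          PM k n r := by
          apply mul_le_mul_of_nonneg_right _ hPM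
          apply mul_le_mul_of_nonneg_right _ (by positivity)
          apply mul_le_mul_of_nonneg_right _ (by positivity)
          exact mul_le_mul_of_nonneg_right hmin (by positivity)
      _ = c * ((Nat.choose (e + r) r : ℝ) * ε ^ e) := by rw [hc]; rw [key]; ring
  have hnn : ∀ e : ℕ, 0 ≤ (min (r + e) n : ℝ) * (Nat.choose (r + e - 1) e : ℝ) *
      ε ^ e * (1 - ε) ^ r * PM k n r := by
    intro e
    have : (0:ℝ) ≤ (min (r + e) n : ℝ) := by positivity
    positivity
  have hfsum : Summable (fun e : ℕ =>
      (min (r + e) n : ℝ) * (Nat.choose (r + e - 1) e : ℝ) * ε ^ e * (1 - ε) ^ r *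
        PM k n r) :=
    Summable.of_nonneg_of_le hnn hle hgsum
  calc (∑' e : ℕ, (min (r + e) n : ℝ) * (Nat.choose (r + e - 1) e : ℝ) * ε ^ e *
        (1 - ε) ^ r * PM k n r)
      ≤ ∑' e : ℕ, c * ((Nat.choose (e + r) r : ℝ) * ε ^ e) :=
        Summable.tsum_le_tsum hle hfsum hgsum
    _ = c * (1 / (1 - ε) ^ (r + 1)) := by
        rw [tsum_mul_left, tsum_choose_mul_geometric_of_norm_lt_one r hε]
    _ = 1 / (1 - ε) * ((r : ℝ) * PM k n r) := by
        rw [hc]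
        field_simp
        ring
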